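/- arXiv:2310.15054 — 3 statements merged into one kernel-verified Lean document; each statement's English description precedes it below -/
import Mathlib

section
/- Let d, M be positive integers, and for each m ∈ {1,…,M} let n_m, N_m be positive integers and G_m ∈ ℝ^{d×n_m} a matrix. Define the objective F(x₁,…,x_M, h₁,…,h_M) = M · Σ_{m=1}^{M} ‖G_m x_m − h_m‖², where x_m ∈ ℝ^{n_m} and h_m ∈ ℝ^d. Let A be the set of tuples (x₁,…,x_M,h₁,…,h_M) with x_{m,i} ∈ [0,1] for all m,i, Σ_i x_{m,i} = N_m for all m, and h_m = G_m x_m − (1/M) Σ_{n=1}^{M} G_n x_n for all m. Let B be the set of tuples with x_{m,i} ∈ [0,1] for all m,i, Σ_i x_{m,i} = N_m for all m, and Σ_{m=1}^{M} h_m = 0. Then: if (x*₁,…,x*_M,h*₁,…,h*_M) ∈ B satisfies F(x*,h*) ≤ F(x,h) for all (x,h) ∈ B, then (x*,h*) ∈ A and F(x*,h*) ≤ F(x,h) for all (x,h) ∈ A. -/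
/-- Theorem 1 of the paper: any minimizer of the relaxed problem (7) (feasible set `B`,
with the constraint `∑ m, h m = 0`) is feasible for, and a minimizer of, the original
problem (6) (feasible set `A`, with the coupling constraints
`h m = G m * x m - (1/M) ∑ n, G n * x n`).  The common objective is
`F (x, h) = M * ∑ m, ‖G m * x m - h m‖²`. -/
theorem stmt_0 (d M : ℕ) (hd : 0 < d) (hM : 0 < M)
    (n N : Fin M → ℕ) (hn : ∀ m, 0 < n m) (hN : ∀ m, 0 < N m)
    (G : ∀ m : Fin M, Matrix (Fin d) (Fin (n m)) ℝ)
    (xs : ∀ m : Fin M, Fin (n m) → ℝ) (hs : Fin M → (Fin d → ℝ))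
    -- (xs, hs) is feasible for the relaxed problem (7):
    (hBfeas : (∀ m i, xs m i ∈ Set.Icc (0 : ℝ) 1) ∧
      (∀ m, (∑ i, xs m i) = (N m : ℝ)) ∧ ((∑ m, hs m) = 0))
    -- (xs, hs) minimizes F over the feasible set of (7):
    (hBmin : ∀ (x : ∀ m : Fin M, Fin (n m) → ℝ) (h : Fin M → (Fin d → ℝ)),
      (∀ m i, x m i ∈ Set.Icc (0 : ℝ) 1) → (∀ m, (∑ i, x m i) = (N m : ℝ)) →
      ((∑ m, h m) = 0) →
      (M : ℝ) * ∑ m, ∑ k, ((G m).mulVec (xs m) k - hs m k) ^ 2 ≤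
        (M : ℝ) * ∑ m, ∑ k, ((G m).mulVec (x m) k - h m k) ^ 2) :
    -- then (xs, hs) is feasible for problem (6):
    ((∀ m i, xs m i ∈ Set.Icc (0 : ℝ) 1) ∧
      (∀ m, (∑ i, xs m i) = (N m : ℝ)) ∧
      (∀ m, hs m = (G m).mulVec (xs m) - (M : ℝ)⁻¹ • ∑ n', (G n').mulVec (xs n'))) ∧
    -- and (xs, hs) minimizes F over the feasible set of (6):
    (∀ (x : ∀ m : Fin M, Fin (n m) → ℝ) (h : Fin M → (Fin d → ℝ)),
      (∀ m i, x m i ∈ Set.Icc (0 : ℝ) 1) → (∀ m, (∑ i, x m i) = (N m : ℝ)) →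
      (∀ m, h m = (G m).mulVec (x m) - (M : ℝ)⁻¹ • ∑ n', (G n').mulVec (x n')) →
      (M : ℝ) * ∑ m, ∑ k, ((G m).mulVec (xs m) k - hs m k) ^ 2 ≤
        (M : ℝ) * ∑ m, ∑ k, ((G m).mulVec (x m) k - h m k) ^ 2) := by
  obtain ⟨hIcc, hsum, hzero⟩ := hBfeas
  have hMR : (0:ℝ) < M := by exact_mod_cast hM
  -- notation
  have hzero' : ∀ k, ∑ m, hs m k = 0 := by
    intro k
    have := congrFun hzero k
    simpa [Finset.sum_apply] using this
  set a : Fin M → Fin d → ℝ := fun m => (G m).mulVec (xs m) with ha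
  set avg : Fin d → ℝ := fun k => (M:ℝ)⁻¹ * ∑ m, a m k with havg
  -- the candidate h' m = a m - avg is feasible for (7)
  have hh' : (∑ m, (fun k => a m k - avg k)) = 0 := by
    funext k
    simp only [Finset.sum_apply, Pi.zero_apply, Finset.sum_sub_distrib,
      Finset.sum_const, Finset.card_univ, Fintype.card_fin, nsmul_eq_mul, havg]
    field_simp
    ring
  have key := hBmin xs (fun m k => a m k - avg k) hIcc hsum hh'
  have key2 : ∑ m, ∑ k, (a m k - hs m k) ^ 2 ≤
      ∑ m, ∑ k, (a m k - (a m k - avg k)) ^ 2 :=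
    le_of_mul_le_mul_left key hMR
  set e : Fin M → Fin d → ℝ := fun m k => a m k - avg k - hs m k with he
  have esum : ∀ k, ∑ m, e m k = 0 := by
    intro k
    have hM0 : (M:ℝ) ≠ 0 := ne_of_gt hMR
    simp only [he, Finset.sum_sub_distrib, hzero', Finset.sum_const,
      Finset.card_univ, Fintype.card_fin, nsmul_eq_mul, havg]
    field_simp
    ring
  have expand : ∑ m, ∑ k, (a m k - hs m k) ^ 2 =
      ∑ m, ∑ k, ((avg k)^2 + 2 * avg k * e m k + (e m k)^2) := by
    apply Finset.sum_congr rfl; intro m _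
    apply Finset.sum_congr rfl; intro k _
    simp only [he]; ring
  have cross : ∑ m, ∑ k, 2 * avg k * e m k = 0 := by
    rw [Finset.sum_comm]
    apply Finset.sum_eq_zero; intro k _
    rw [← Finset.mul_sum, esum k, mul_zero]
  have rhs : ∑ m, ∑ k, (a m k - (a m k - avg k)) ^ 2 = ∑ _m : Fin M, ∑ k, (avg k)^2 := by
    apply Finset.sum_congr rfl; intro m _
    apply Finset.sum_congr rfl; intro k _
    ring
  have Ele : ∑ m, ∑ k, (e m k)^2 ≤ 0 := by
    have h1 : ∑ m, ∑ k, ((avg k)^2 + 2 * avg k * e m k + (e m k)^2)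
        = ∑ _m : Fin M, ∑ k, (avg k)^2 + ∑ m, ∑ k, 2 * avg k * e m k + ∑ m, ∑ k, (e m k)^2 := by
      simp [Finset.sum_add_distrib]
    rw [expand, rhs, h1, cross] at key2
    linarith
  have Ezero : ∀ m k, e m k = 0 := by
    have hnn : ∀ m ∈ (Finset.univ : Finset (Fin M)), 0 ≤ ∑ k, (e m k)^2 := by
      intro m _; positivity
    have := le_antisymm Ele (Finset.sum_nonneg hnn)
    intro m k
    have hm := (Finset.sum_eq_zero_iff_of_nonneg hnn).mp this m (Finset.mem_univ m)
    have hk := (Finset.sum_eq_zero_iff_of_nonneg (by intro k _; positivity)).mp hm k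
      (Finset.mem_univ k)
    exact pow_eq_zero_iff (n := 2) (by norm_num) |>.mp hk
  have hfeas : ∀ m, hs m = (G m).mulVec (xs m) - (M : ℝ)⁻¹ • ∑ n', (G n').mulVec (xs n') := by
    intro m
    funext k
    have := Ezero m k
    simp only [he] at this
    have h2 : hs m k = a m k - avg k := by linarith
    simp only [Pi.sub_apply, Pi.smul_apply, Finset.sum_apply, smul_eq_mul]
    rw [h2]
  refine ⟨⟨hIcc, hsum, hfeas⟩, ?_⟩
  intro x h hx hxsum hcouple
  apply hBmin x h hx hxsum
  funext k
  have hval : ∀ m, h m k = (G m).mulVec (x m) k - (M:ℝ)⁻¹ * ∑ n', (G n').mulVec (x n') k := by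
    intro m
    have := congrFun (hcouple m) k
    simpa [Finset.sum_apply] using this
  simp only [Finset.sum_apply, Pi.zero_apply]
  rw [Finset.sum_congr rfl (fun m _ => hval m)]
  simp only [Finset.sum_sub_distrib, Finset.sum_const, Finset.card_univ,
    Fintype.card_fin, nsmul_eq_mul]
  field_simp
  ring
end

section
/- Let d, M be positive integers, and for each m ∈ {1,…,M} let n_m, N_m be positive integers and G_m ∈ ℝ^{d×n_m} a matrix. Define F(x,h) = M · Σ_{m=1}^{M} ‖G_m x_m − h_m‖² and let B be the set of tuples (x₁,…,x_M,h₁,…,h_M) with x_{m,i} ∈ [0,1] for all m,i, Σ_i x_{m,i} = N_m for all m, and Σ_{m=1}^{M} h_m = 0. If (x*₁,…,x*_M,h*₁,…,h*_M) ∈ B satisfies F(x*,h*) ≤ F(x,h) for all (x,h) ∈ B, then for every m ∈ {1,…,M} it holds that h*_m = G_m x*_m − (1/M) Σ_{n=1}^{M} G_n x*_n. -/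
/-- Feasibility step in the proof of Theorem 1: any minimizer of the relaxed problem (7)
automatically satisfies the coupling constraints
`h m = G m * x m - (1/M) ∑ n, G n * x n` of problem (6). -/
theorem stmt_1 (d M : ℕ) (hd : 0 < d) (hM : 0 < M)
    (n N : Fin M → ℕ) (hn : ∀ m, 0 < n m) (hN : ∀ m, 0 < N m)
    (G : ∀ m : Fin M, Matrix (Fin d) (Fin (n m)) ℝ)
    (xs : ∀ m : Fin M, Fin (n m) → ℝ) (hs : Fin M → (Fin d → ℝ))
    -- (xs, hs) is feasible for the relaxed problem (7):
    (hBfeas : (∀ m i, xs m i ∈ Set.Icc (0 : ℝ) 1) ∧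
      (∀ m, (∑ i, xs m i) = (N m : ℝ)) ∧ ((∑ m, hs m) = 0))
    -- (xs, hs) minimizes F over the feasible set of (7):
    (hBmin : ∀ (x : ∀ m : Fin M, Fin (n m) → ℝ) (h : Fin M → (Fin d → ℝ)),
      (∀ m i, x m i ∈ Set.Icc (0 : ℝ) 1) → (∀ m, (∑ i, x m i) = (N m : ℝ)) →
      ((∑ m, h m) = 0) →
      (M : ℝ) * ∑ m, ∑ k, ((G m).mulVec (xs m) k - hs m k) ^ 2 ≤
        (M : ℝ) * ∑ m, ∑ k, ((G m).mulVec (x m) k - h m k) ^ 2) :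
    ∀ m, hs m = (G m).mulVec (xs m) - (M : ℝ)⁻¹ • ∑ n', (G n').mulVec (xs n') := by
  obtain ⟨hbox, hsumx, hzero⟩ := hBfeas
  set A : Fin M → Fin d → ℝ := fun m => (G m).mulVec (xs m) with hA
  set c : Fin d → ℝ := fun k => (M : ℝ)⁻¹ * ∑ n', A n' k with hc
  have hMne : (M : ℝ) ≠ 0 := Nat.cast_ne_zero.mpr hM.ne'
  have hMpos : (0 : ℝ) < (M : ℝ) := Nat.cast_pos.mpr hM
  have hzk : ∀ k, (∑ m, hs m k) = 0 := by
    intro k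
    have := congrFun hzero k
    simpa [Finset.sum_apply] using this
  have hck : ∀ k, (M : ℝ) * c k = ∑ n', A n' k := by
    intro k
    simp only [hc]
    field_simp
  have hxk : ∀ k, (∑ m, (A m k - hs m k)) = (M : ℝ) * c k := by
    intro k
    rw [Finset.sum_sub_distrib, hzk k, hck k, sub_zero]
  -- h' = A - c is feasible
  have hfeas' : (∑ m, (fun k => A m k - c k)) = 0 := by
    funext k
    have h1 : (∑ m, (A m k - c k)) = (∑ m, A m k) - (M : ℝ) * c k := by
      rw [Finset.sum_sub_distrib, Finset.sum_const, Finset.card_univ, Fintype.card_fin,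
        nsmul_eq_mul]
    simp only [Finset.sum_apply, Pi.zero_apply]
    rw [h1, hck k, sub_self]
  have hineq := hBmin xs (fun m k => A m k - c k) hbox hsumx hfeas'
  have hineq2 : (∑ m, ∑ k, (A m k - hs m k) ^ 2) ≤ ∑ m : Fin M, ∑ k : Fin d, (c k) ^ 2 := by
    have := (mul_le_mul_iff_right₀ hMpos).mp hineq
    simpa [hA] using this
  -- decomposition identity
  have hdecomp : (∑ m, ∑ k, (A m k - hs m k) ^ 2)
      = (∑ m, ∑ k, (A m k - hs m k - c k) ^ 2) + ∑ m : Fin M, ∑ k : Fin d, (c k) ^ 2 := by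
    rw [Finset.sum_comm, Finset.sum_comm (f := fun m k => (A m k - hs m k - c k) ^ 2),
      Finset.sum_comm (f := fun (_ : Fin M) k => (c k) ^ 2), ← Finset.sum_add_distrib]
    apply Finset.sum_congr rfl
    intro k _
    have expand : ∀ m : Fin M, (A m k - hs m k) ^ 2
        = (A m k - hs m k - c k) ^ 2 + 2 * c k * (A m k - hs m k) - c k ^ 2 := by
      intro m; ring
    calc (∑ m, (A m k - hs m k) ^ 2)
        = ∑ m, ((A m k - hs m k - c k) ^ 2 + 2 * c k * (A m k - hs m k) - c k ^ 2) :=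
          Finset.sum_congr rfl fun m _ => expand m
      _ = (∑ m, (A m k - hs m k - c k) ^ 2) + 2 * c k * (∑ m, (A m k - hs m k))
            - (M : ℝ) * c k ^ 2 := by
          rw [Finset.sum_sub_distrib, Finset.sum_add_distrib, ← Finset.mul_sum,
            Finset.sum_const, Finset.card_univ, Fintype.card_fin, nsmul_eq_mul]
      _ = (∑ m, (A m k - hs m k - c k) ^ 2) + ∑ _m : Fin M, c k ^ 2 := by
          rw [hxk k, Finset.sum_const, Finset.card_univ, Fintype.card_fin, nsmul_eq_mul]
          ring
  have hzero2 : (∑ m, ∑ k, (A m k - hs m k - c k) ^ 2) = 0 := by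
    have hle : (∑ m, ∑ k, (A m k - hs m k - c k) ^ 2) ≤ 0 := by linarith [hineq2, hdecomp.symm.le]
    have hge : 0 ≤ (∑ m, ∑ k, (A m k - hs m k - c k) ^ 2) :=
      Finset.sum_nonneg fun m _ => Finset.sum_nonneg fun k _ => sq_nonneg _
    linarith
  have hterm : ∀ m k, (A m k - hs m k - c k) ^ 2 = 0 := by
    intro m k
    have h1 := (Finset.sum_eq_zero_iff_of_nonneg
      (fun m _ => Finset.sum_nonneg fun k _ => sq_nonneg (A m k - hs m k - c k))).mp hzero2
      m (Finset.mem_univ m)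
    exact (Finset.sum_eq_zero_iff_of_nonneg (fun k _ => sq_nonneg _)).mp h1 k (Finset.mem_univ k)
  intro m
  funext k
  have := sub_eq_zero.mp (pow_eq_zero_iff (n := 2) (by norm_num) |>.mp (hterm m k))
  have hck' : ((M : ℝ)⁻¹ • ∑ n', (G n').mulVec (xs n')) k = c k := by
    simp [hc, hA, Finset.sum_apply]
  simp only [Pi.sub_apply, hck']
  linarith [this]
end

section
/- Let d, M be positive integers, and for each m ∈ {1,…,M} let n_m, N_m be positive integers and G_m ∈ ℝ^{d×n_m} a matrix. Suppose (x*₁,…,x*_M,h*₁,…,h*_M) with x*_{m,i} ∈ [0,1] for all m,i, Σ_i x*_{m,i} = N_m for all m, and Σ_{m=1}^{M} h*_m = 0 minimizes M Σ_{m=1}^{M} ‖G_m x_m − h_m‖² over all tuples satisfying these constraints. Then x*₁,…,x*_M minimizes ‖Σ_{m=1}^{M} G_m x_m‖² over all x₁,…,x_M with x_{m,i} ∈ [0,1] for all m,i and Σ_i x_{m,i} = N_m for all m. -/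
lemma aux_sq_sum_le {M d : ℕ} (a h : Fin M → Fin d → ℝ) (hh : (∑ m, h m) = 0) :
    (∑ k, (∑ m, a m k) ^ 2) ≤ (M : ℝ) * ∑ m, ∑ k, (a m k - h m k) ^ 2 := by
  have key : ∀ k, (∑ m, a m k) ^ 2 ≤ (M : ℝ) * ∑ m, (a m k - h m k) ^ 2 := by
    intro k
    have h0 : (∑ m, h m k) = 0 := by
      have := congrFun hh k; simpa using this
    have : (∑ m, a m k) = ∑ m, (a m k - h m k) := by
      rw [Finset.sum_sub_distrib, h0, sub_zero]
    rw [this]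
    have := sq_sum_le_card_mul_sum_sq (s := (Finset.univ : Finset (Fin M)))
      (f := fun m => a m k - h m k)
    simpa using this
  calc (∑ k, (∑ m, a m k) ^ 2) ≤ ∑ k, (M : ℝ) * ∑ m, (a m k - h m k) ^ 2 :=
        Finset.sum_le_sum (fun k _ => key k)
    _ = (M : ℝ) * ∑ m, ∑ k, (a m k - h m k) ^ 2 := by
        rw [← Finset.mul_sum, Finset.sum_comm]

/-- Consequence of Theorem 1: an optimal solution of the relaxed separable problem (7)
yields an optimal solution of the original coordinated gradient-diversity problem (5),
i.e. `x*` minimizes `‖∑ m, G m * x m‖²` over the box/simplex constraints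
(squared Euclidean norm written coordinatewise). -/
theorem stmt_5 (d M : ℕ) (hd : 0 < d) (hM : 0 < M)
    (n N : Fin M → ℕ) (hn : ∀ m, 0 < n m) (hN : ∀ m, 0 < N m)
    (G : ∀ m : Fin M, Matrix (Fin d) (Fin (n m)) ℝ)
    (xs : ∀ m : Fin M, Fin (n m) → ℝ) (hs : Fin M → (Fin d → ℝ))
    -- (xs, hs) is feasible for the relaxed problem (7):
    (hBfeas : (∀ m i, xs m i ∈ Set.Icc (0 : ℝ) 1) ∧
      (∀ m, (∑ i, xs m i) = (N m : ℝ)) ∧ ((∑ m, hs m) = 0))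
    -- (xs, hs) minimizes M ∑ m ‖G m x m - h m‖² over the feasible set of (7):
    (hBmin : ∀ (x : ∀ m : Fin M, Fin (n m) → ℝ) (h : Fin M → (Fin d → ℝ)),
      (∀ m i, x m i ∈ Set.Icc (0 : ℝ) 1) → (∀ m, (∑ i, x m i) = (N m : ℝ)) →
      ((∑ m, h m) = 0) →
      (M : ℝ) * ∑ m, ∑ k, ((G m).mulVec (xs m) k - hs m k) ^ 2 ≤
        (M : ℝ) * ∑ m, ∑ k, ((G m).mulVec (x m) k - h m k) ^ 2) :
    -- then xs minimizes ‖∑ m, G m x m‖² over the box/simplex constraints: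
    ∀ (x : ∀ m : Fin M, Fin (n m) → ℝ),
      (∀ m i, x m i ∈ Set.Icc (0 : ℝ) 1) → (∀ m, (∑ i, x m i) = (N m : ℝ)) →
      (∑ k, (∑ m, (G m).mulVec (xs m) k) ^ 2) ≤
        ∑ k, (∑ m, (G m).mulVec (x m) k) ^ 2 := by
  intro x hxbox hxsum
  have hMR : (0 : ℝ) < M := by exact_mod_cast hM
  set a : Fin M → Fin d → ℝ := fun m => (G m).mulVec (x m) with ha
  set S : Fin d → ℝ := fun k => ∑ m, a m k with hS
  set h : Fin M → Fin d → ℝ := fun m k => a m k - (1 / M) * S k with hdef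
  have hsum0 : (∑ m, h m) = 0 := by
    funext k
    have : (∑ m, h m) k = ∑ m, h m k := by simp
    rw [this]
    simp only [hdef, Finset.sum_sub_distrib, Finset.sum_const, Finset.card_univ,
      Fintype.card_fin, nsmul_eq_mul]
    have : (M : ℝ) * ((1 / M) * S k) = S k := by field_simp
    rw [this]
    simp [hS]
  -- step 1
  have step1 : (∑ k, (∑ m, (G m).mulVec (xs m) k) ^ 2) ≤
      (M : ℝ) * ∑ m, ∑ k, ((G m).mulVec (xs m) k - hs m k) ^ 2 :=
    aux_sq_sum_le _ _ hBfeas.2.2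
  -- step 2
  have step2 := hBmin x h hxbox hxsum hsum0
  -- step 3 : equality
  have step3 : (M : ℝ) * ∑ m, ∑ k, ((G m).mulVec (x m) k - h m k) ^ 2 =
      ∑ k, (∑ m, (G m).mulVec (x m) k) ^ 2 := by
    have : ∀ m k, (G m).mulVec (x m) k - h m k = (1 / M) * S k := by
      intro m k; simp [hdef, ha]
    simp only [this]
    rw [Finset.sum_comm]
    have : ∀ k, ∑ _m : Fin M, ((1 / M : ℝ) * S k) ^ 2 = (1 / M) * S k ^ 2 := by
      intro k
      rw [Finset.sum_const, Finset.card_univ, Fintype.card_fin, nsmul_eq_mul]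
      rw [mul_pow]
      field_simp
    simp only [this]
    rw [← Finset.mul_sum, ← mul_assoc]
    have : (M : ℝ) * (1 / M) = 1 := by field_simp
    rw [this, one_mul]
  calc (∑ k, (∑ m, (G m).mulVec (xs m) k) ^ 2)
      ≤ (M : ℝ) * ∑ m, ∑ k, ((G m).mulVec (xs m) k - hs m k) ^ 2 := step1
    _ ≤ (M : ℝ) * ∑ m, ∑ k, ((G m).mulVec (x m) k - h m k) ^ 2 := step2
    _ = ∑ k, (∑ m, (G m).mulVec (x m) k) ^ 2 := step3
end
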